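/- If G is a P4-extendible graph, then its complement graph is also P4-extendible. -/
import Mathlib


open SimpleGraph Polynomial

/-- The finite vertex set `W` induces a path `P₄` in `G`. -/
def InducesP4 {V : Type*} (G : SimpleGraph V) (W : Finset V) : Prop :=
  Nonempty (G.induce (W : Set V) ≃g SimpleGraph.pathGraph 4)

/-- A graph is `P₄`-sparse if every set of five vertices contains at most one
4-element subset inducing a path `P₄`. -/
def P4Sparse {V : Type*} (G : SimpleGraph V) : Prop :=
  ∀ s : Finset V, s.card = 5 →
    {W : Finset V | W ⊆ s ∧ W.card = 4 ∧ InducesP4 G W}.Subsingleton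

/-- A graph is `P₄`-extendible if for every vertex subset `W` inducing a path `P₄`
there is at most one vertex `x ∉ W` that induces a `P₄` together with some three
vertices of `W`. -/
def P4Extendible {V : Type*} [DecidableEq V] (G : SimpleGraph V) : Prop :=
  ∀ W : Finset V, InducesP4 G W →
    {x : V | x ∉ W ∧ ∃ T : Finset V, T ⊆ W ∧ T.card = 3 ∧
      InducesP4 G (insert x T)}.Subsingleton

/-- An isomorphism of graphs induces an isomorphism of complements. -/
def isoCompl {α β : Type*} {G : SimpleGraph α} {H : SimpleGraph β} (e : G ≃g H) :
    Gᶜ ≃g Hᶜ where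
  toEquiv := e.toEquiv
  map_rel_iff' := by
    intro u v
    simp only [compl_adj, ne_eq, EmbeddingLike.apply_eq_iff_eq]
    exact and_congr Iff.rfl (not_congr e.map_adj_iff)

/-- `P₄` is self-complementary. -/
def pathGraph4Compl : (SimpleGraph.pathGraph 4)ᶜ ≃g SimpleGraph.pathGraph 4 where
  toEquiv := Equiv.mk ![1, 3, 0, 2] ![2, 0, 3, 1] (by decide) (by decide)
  map_rel_iff' := by
    intro a b
    fin_cases a <;> fin_cases b <;>
      simp [SimpleGraph.pathGraph_adj, SimpleGraph.compl_adj] <;> decide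

/-- Induce commutes with complement. -/
def induceCompl {V : Type*} (G : SimpleGraph V) (s : Set V) :
    (Gᶜ.induce s) ≃g (G.induce s)ᶜ where
  toEquiv := Equiv.refl s
  map_rel_iff' := by
    intro u v
    simp only [Equiv.refl_apply, comap_adj, compl_adj, ne_eq, Subtype.ext_iff]
    tauto

theorem inducesP4_of_compl {V : Type*} (G : SimpleGraph V) (W : Finset V)
    (h : InducesP4 G W) : InducesP4 Gᶜ W := by
  obtain ⟨e⟩ := h
  exact ⟨(induceCompl G W).trans ((isoCompl e).trans pathGraph4Compl)⟩

theorem inducesP4_compl_iff {V : Type*} (G : SimpleGraph V) (W : Finset V) :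
    InducesP4 Gᶜ W ↔ InducesP4 G W := by
  constructor
  · intro h
    have := inducesP4_of_compl Gᶜ W h
    rwa [compl_compl] at this
  · exact inducesP4_of_compl G W

/-- The complement of a `P₄`-extendible graph is `P₄`-extendible. -/
theorem P4Extendible.compl {V : Type*} [DecidableEq V] (G : SimpleGraph V)
    (hG : P4Extendible G) : P4Extendible Gᶜ := by
  intro W hW
  have := hG W ((inducesP4_compl_iff G W).mp hW)
  intro x hx y hy
  refine this ?_ ?_
  · obtain ⟨hxW, T, hT, hTc, hind⟩ := hx
    exact ⟨hxW, T, hT, hTc, (inducesP4_compl_iff G _).mp hind⟩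
  · obtain ⟨hyW, T, hT, hTc, hind⟩ := hy
    exact ⟨hyW, T, hT, hTc, (inducesP4_compl_iff G _).mp hind⟩
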